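/- If $S_1$ and $S_2$ are positive semidefinite complex $n \times n$ matrices, then the matrix $I + S_1 S_2$ is invertible. -/

import Mathlib

open Matrix
open scoped ComplexOrder

open scoped MatrixOrder in
noncomputable def Matrix.PosSemidef.sqrt {m : Type*} [Fintype m] [DecidableEq m]
    {A : Matrix m m ℂ} (_ : A.PosSemidef) : Matrix m m ℂ := CFC.sqrt A

open scoped MatrixOrder in
lemma Matrix.PosSemidef.posSemidef_sqrt {m : Type*} [Fintype m] [DecidableEq m]
    {A : Matrix m m ℂ} (hA : A.PosSemidef) : hA.sqrt.PosSemidef :=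
  (CFC.sqrt_nonneg A).posSemidef

open scoped MatrixOrder in
lemma Matrix.PosSemidef.sqrt_mul_self {m : Type*} [Fintype m] [DecidableEq m]
    {A : Matrix m m ℂ} (hA : A.PosSemidef) : hA.sqrt * hA.sqrt = A :=
  CFC.sqrt_mul_sqrt_self A hA.nonneg

theorem stmt_0 (n : ℕ) (S1 S2 : Matrix (Fin n) (Fin n) ℂ)
    (h1 : S1.PosSemidef) (h2 : S2.PosSemidef) :
    IsUnit (1 + S1 * S2) := by
  rw [Matrix.isUnit_iff_isUnit_det, isUnit_iff_ne_zero]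
  have hs := h1.posSemidef_sqrt
  have key : (1 + S1 * S2).det = (1 + h1.sqrt * S2 * h1.sqrt).det := by
    rw [add_comm, add_comm (1 : Matrix (Fin n) (Fin n) ℂ)]
    calc (S1 * S2 + 1).det = (h1.sqrt * (h1.sqrt * S2) + 1).det := by
          rw [← Matrix.mul_assoc, h1.sqrt_mul_self]
      _ = ((h1.sqrt * S2) * h1.sqrt + 1).det := by rw [Matrix.det_mul_add_one_comm]
      _ = (h1.sqrt * S2 * h1.sqrt + 1).det := rfl
  rw [key]
  have hpsd : (h1.sqrt * S2 * h1.sqrt).PosSemidef := by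
    have := h2.mul_mul_conjTranspose_same h1.sqrt
    rwa [hs.isHermitian.eq] at this
  have hpd : (1 + h1.sqrt * S2 * h1.sqrt).PosDef :=
    Matrix.PosDef.add_posSemidef Matrix.PosDef.one hpsd
  exact hpd.det_pos.ne'
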